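/- Isometry of the Bloch direct-integral transform: let U : ℝ × ℝ → ℂⁿ be continuous, 2π-periodic in its second argument, and vanishing for σ outside [−1/2,1/2] in its first argument, and define (ℬU)(x) = ∫_{−1/2}^{1/2} e^{iσx} U(σ,x) dσ for x ∈ ℝ. Then ℬU ∈ L²(ℝ,ℂⁿ) and ∫_ℝ |(ℬU)(x)|² dx = ∫_{−1/2}^{1/2} ∫_{−π}^{π} |U(σ,x)|² dx dσ. -/

import Mathlib

open Real MeasureTheory AddCircle

lemma parseval_cont {T : ℝ} [hT : Fact (0 < T)] (G : C(AddCircle T, ℂ)) :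
    HasSum (fun i : ℤ => ‖fourierCoeff (G : AddCircle T → ℂ) i‖ ^ 2)
      (∫ t : AddCircle T, ‖G t‖ ^ 2 ∂haarAddCircle) := by
  set F := ContinuousMap.toLp (E := ℂ) 2 haarAddCircle ℂ G with hF
  have hcoeff := fourierCoeff_toLp G
  have hsum : Summable fun i : ℤ => ‖fourierCoeff (F : AddCircle T → ℂ) i‖ ^ 2 := by
    have h := lp.memℓp (fourierBasis.repr F)
    rw [memℓp_gen_iff (by norm_num)] at h
    simp only [fourierBasis_repr] at h
    have h2 : ∀ i : ℤ, ‖fourierCoeff (F : AddCircle T → ℂ) i‖ ^ ENNReal.toReal 2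
        = ‖fourierCoeff (F : AddCircle T → ℂ) i‖ ^ (2:ℕ) := fun i => by
      rw [show ENNReal.toReal 2 = ((2:ℕ):ℝ) by norm_num, Real.rpow_natCast]
    exact (summable_congr h2).mp h
  have htsum := tsum_sq_fourierCoeff F
  have hint : (∫ t : AddCircle T, ‖F t‖ ^ 2 ∂haarAddCircle)
      = ∫ t : AddCircle T, ‖G t‖ ^ 2 ∂haarAddCircle := by
    apply integral_congr_ae
    filter_upwards [ContinuousMap.coeFn_toLp (p := 2) (μ := haarAddCircle) (𝕜 := ℂ) G] with t ht
    rw [ht]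
  have H := hsum.hasSum
  rw [htsum, hint] at H
  convert H using 3 with i
  exact congrArg _ (hcoeff i).symm

lemma parseval_interval (g : ℝ → ℂ) (hg : Continuous g)
    (hend : g (-(1:ℝ)/2) = g (1/2)) :
    HasSum
      (fun k : ℤ => ‖∫ σ in (-(1:ℝ)/2)..(1/2),
        Complex.exp (2 * π * Complex.I * k * σ) * g σ‖ ^ 2)
      (∫ σ in (-(1:ℝ)/2)..(1/2), ‖g σ‖ ^ 2) := by
  haveI : Fact ((0:ℝ) < 1) := ⟨one_pos⟩
  have hend' : g (-(1:ℝ)/2) = g (-(1:ℝ)/2 + 1) := by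
    rw [hend]; norm_num
  set G : C(AddCircle (1:ℝ), ℂ) :=
    ⟨AddCircle.liftIco 1 (-(1:ℝ)/2) g,
      AddCircle.liftIco_continuous hend' hg.continuousOn⟩ with hGdef
  have hGcoe : ∀ x : ℝ, x ∈ Set.Ico (-(1:ℝ)/2) (-(1:ℝ)/2 + 1) → G x = g x := by
    intro x hx
    exact AddCircle.liftIco_coe_apply hx
  have key : ∀ m : ℤ, fourierCoeff (⇑G) m
      = ∫ x in (-(1:ℝ)/2)..(1/2), Complex.exp (2 * π * Complex.I * (-m) * x) * g x := by
    intro m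
    rw [fourierCoeff_eq_intervalIntegral (⇑G) m (-(1:ℝ)/2)]
    rw [show (-(1:ℝ)/2 + 1) = 1/2 by norm_num]
    rw [one_div_one, one_smul]
    rw [intervalIntegral.integral_of_le (by norm_num : (-(1:ℝ)/2) ≤ 1/2),
      intervalIntegral.integral_of_le (by norm_num : (-(1:ℝ)/2) ≤ 1/2),
      integral_Ioc_eq_integral_Ioo, integral_Ioc_eq_integral_Ioo]
    refine setIntegral_congr_fun measurableSet_Ioo fun x hx => ?_
    have hx' : x ∈ Set.Ico (-(1:ℝ)/2) (-(1:ℝ)/2 + 1) := by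
      constructor
      · exact le_of_lt hx.1
      · rw [show (-(1:ℝ)/2 + 1) = 1/2 by norm_num]; exact hx.2
    rw [hGcoe x hx', fourier_coe_apply, smul_eq_mul]
    norm_num
  have hmeas : (∫ t : AddCircle (1:ℝ), ‖G t‖ ^ 2 ∂AddCircle.haarAddCircle)
      = ∫ σ in (-(1:ℝ)/2)..(1/2), ‖g σ‖ ^ 2 := by
    have h1 : (volume : Measure (AddCircle (1:ℝ))) = AddCircle.haarAddCircle := by
      rw [AddCircle.volume_eq_smul_haarAddCircle]
      simp
    rw [← h1]
    rw [← AddCircle.intervalIntegral_preimage (1:ℝ) (-(1:ℝ)/2) (fun z => ‖G z‖ ^ 2)]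
    rw [show (-(1:ℝ)/2 + 1) = 1/2 by norm_num]
    rw [intervalIntegral.integral_of_le (by norm_num : (-(1:ℝ)/2) ≤ 1/2),
      intervalIntegral.integral_of_le (by norm_num : (-(1:ℝ)/2) ≤ 1/2),
      integral_Ioc_eq_integral_Ioo, integral_Ioc_eq_integral_Ioo]
    refine setIntegral_congr_fun measurableSet_Ioo fun x hx => ?_
    have hx' : x ∈ Set.Ico (-(1:ℝ)/2) (-(1:ℝ)/2 + 1) := by
      constructor
      · exact le_of_lt hx.1
      · rw [show (-(1:ℝ)/2 + 1) = 1/2 by norm_num]; exact hx.2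
    rw [hGcoe x hx']
  have H := parseval_cont G
  rw [hmeas] at H
  have H2 := (Equiv.neg ℤ).hasSum_iff.mpr H
  refine H2.congr_fun fun k => ?_
  simp only [Function.comp, Equiv.neg_apply]
  rw [key]
  norm_num

lemma boundary_zero {n : ℕ} {U : ℝ → ℝ → EuclideanSpace ℂ (Fin n)}
    (hcont : Continuous (Function.uncurry U))
    (hsupp : ∀ σ : ℝ, σ ∉ Set.Icc (-(1:ℝ)/2) (1/2) → U σ = 0) :
    U (1/2) = 0 ∧ U (-(1:ℝ)/2) = 0 := by
  have hU : ∀ x : ℝ, Continuous fun σ => U σ x := fun x =>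
    hcont.comp (continuous_id.prodMk continuous_const)
  constructor
  · funext x
    have h1 : Filter.Tendsto (fun σ => U σ x) (nhdsWithin (1/2) (Set.Ioi (1/2)))
        (nhds (U (1/2) x)) :=
      ((hU x).continuousAt (x := (1/2:ℝ))).continuousWithinAt.tendsto
    have h2 : Filter.Tendsto (fun σ => U σ x) (nhdsWithin (1/2) (Set.Ioi (1/2)))
        (nhds 0) := by
      apply Filter.Tendsto.congr' _ tendsto_const_nhds
      filter_upwards [self_mem_nhdsWithin] with σ hσ
      have : σ ∉ Set.Icc (-(1:ℝ)/2) (1/2) := by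
        intro hmem; exact absurd hmem.2 (not_le.mpr hσ)
      rw [hsupp σ this]; rfl
    exact (tendsto_nhds_unique h1 h2)
  · funext x
    have h1 : Filter.Tendsto (fun σ => U σ x) (nhdsWithin (-(1:ℝ)/2) (Set.Iio (-(1:ℝ)/2)))
        (nhds (U (-(1:ℝ)/2) x)) :=
      ((hU x).continuousAt (x := (-(1:ℝ)/2))).continuousWithinAt.tendsto
    have h2 : Filter.Tendsto (fun σ => U σ x) (nhdsWithin (-(1:ℝ)/2) (Set.Iio (-(1:ℝ)/2)))
        (nhds 0) := by
      apply Filter.Tendsto.congr' _ tendsto_const_nhds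
      filter_upwards [self_mem_nhdsWithin] with σ hσ
      have : σ ∉ Set.Icc (-(1:ℝ)/2) (1/2) := by
        intro hmem; exact absurd hmem.1 (not_le.mpr hσ)
      rw [hsupp σ this]; rfl
    exact (tendsto_nhds_unique h1 h2)

lemma pointwise_parseval {n : ℕ} {U : ℝ → ℝ → EuclideanSpace ℂ (Fin n)}
    (hcont : Continuous (Function.uncurry U))
    (hsupp : ∀ σ : ℝ, σ ∉ Set.Icc (-(1:ℝ)/2) (1/2) → U σ = 0) (y : ℝ) :
    HasSum
      (fun k : ℤ => ‖∫ σ in (-(1:ℝ)/2)..(1/2),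
          Complex.exp (Complex.I * σ * ((y + 2 * π * k : ℝ) : ℂ)) • U σ y‖ ^ 2)
      (∫ σ in (-(1:ℝ)/2)..(1/2), ‖U σ y‖ ^ 2) := by
  have hUy : Continuous fun σ => U σ y :=
    hcont.comp (continuous_id.prodMk continuous_const)
  set g : Fin n → ℝ → ℂ := fun j σ => Complex.exp (Complex.I * σ * y) * (U σ y j) with hg
  have hgcont : ∀ j, Continuous (g j) := by
    intro j
    apply Continuous.mul
    · exact Complex.continuous_exp.comp
        ((continuous_const.mul Complex.continuous_ofReal).mul continuous_const)
    · exact (EuclideanSpace.proj j).continuous.comp hUy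
  have hbd := boundary_zero hcont hsupp
  have hgend : ∀ j, g j (-(1:ℝ)/2) = g j (1/2) := by
    intro j
    have e1 : U (1/2) y j = 0 := by rw [hbd.1]; rfl
    have e2 : U (-(1:ℝ)/2) y j = 0 := by rw [hbd.2]; rfl
    show Complex.exp _ * (U (-(1:ℝ)/2) y j) = Complex.exp _ * (U (1/2) y j)
    rw [e1, e2, mul_zero, mul_zero]
  have hint : ∀ x : ℝ, IntervalIntegrable (fun σ => Complex.exp (Complex.I * σ * x) • U σ y)
      volume (-(1:ℝ)/2) (1/2) := by
    intro x
    apply Continuous.intervalIntegrable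
    apply Continuous.fun_smul
    · exact Complex.continuous_exp.comp
        ((continuous_const.mul Complex.continuous_ofReal).mul continuous_const)
    · exact hUy
  have hcoef : ∀ (k : ℤ) (j : Fin n),
      (∫ σ in (-(1:ℝ)/2)..(1/2),
          Complex.exp (Complex.I * σ * ((y + 2 * π * k : ℝ) : ℂ)) • U σ y) j
        = ∫ σ in (-(1:ℝ)/2)..(1/2), Complex.exp (2 * π * Complex.I * k * σ) * g j σ := by
    intro k j
    have h1 : (∫ σ in (-(1:ℝ)/2)..(1/2),
          Complex.exp (Complex.I * σ * ((y + 2 * π * k : ℝ) : ℂ)) • U σ y) j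
        = ∫ σ in (-(1:ℝ)/2)..(1/2),
          (Complex.exp (Complex.I * σ * ((y + 2 * π * k : ℝ) : ℂ)) • U σ y) j :=
      (ContinuousLinearMap.intervalIntegral_comp_comm
        (PiLp.proj (𝕜 := ℂ) 2 (fun _ : Fin n => ℂ) j) (hint (y + 2 * π * k))).symm
    rw [h1]
    apply intervalIntegral.integral_congr
    intro σ _
    simp only [PiLp.smul_apply, smul_eq_mul, hg]
    rw [← mul_assoc, ← Complex.exp_add]
    congr 2
    push_cast
    ring
  have Hj : ∀ j : Fin n,
      HasSum (fun k : ℤ => ‖(∫ σ in (-(1:ℝ)/2)..(1/2),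
          Complex.exp (Complex.I * σ * ((y + 2 * π * k : ℝ) : ℂ)) • U σ y) j‖ ^ 2)
        (∫ σ in (-(1:ℝ)/2)..(1/2), ‖g j σ‖ ^ 2) := by
    intro j
    have := parseval_interval (g j) (hgcont j) (hgend j)
    refine this.congr_fun fun k => ?_
    rw [hcoef k j]
  have Hsum := hasSum_sum (f := fun (j : Fin n) (k : ℤ) =>
    ‖(∫ σ in (-(1:ℝ)/2)..(1/2),
        Complex.exp (Complex.I * σ * ((y + 2 * π * k : ℝ) : ℂ)) • U σ y) j‖ ^ 2)
    (s := Finset.univ) (fun j _ => Hj j)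
  have hnorm_g : ∀ (j : Fin n) (σ : ℝ), ‖g j σ‖ = ‖U σ y j‖ := by
    intro j σ
    show ‖Complex.exp (Complex.I * σ * y) * (U σ y j)‖ = _
    rw [norm_mul]
    have h1 : Complex.I * (σ:ℂ) * (y:ℂ) = ((σ * y : ℝ) : ℂ) * Complex.I := by push_cast; ring
    rw [h1, Complex.norm_exp_ofReal_mul_I, one_mul]
  have htot : (∑ j : Fin n, ∫ σ in (-(1:ℝ)/2)..(1/2), ‖g j σ‖ ^ 2)
      = ∫ σ in (-(1:ℝ)/2)..(1/2), ‖U σ y‖ ^ 2 := by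
    rw [← intervalIntegral.integral_finset_sum]
    · apply intervalIntegral.integral_congr
      intro σ hσ
      show ∑ j : Fin n, ‖g j σ‖ ^ 2 = ‖U σ y‖ ^ 2
      rw [EuclideanSpace.norm_eq, Real.sq_sqrt (by positivity)]
      exact Finset.sum_congr rfl fun j _ => by rw [hnorm_g]
    · intro j hj
      exact ((hgcont j).norm.pow 2).intervalIntegrable _ _
  rw [htot] at Hsum
  refine Hsum.congr_fun fun k => ?_
  rw [EuclideanSpace.norm_eq, Real.sq_sqrt (by positivity)]

noncomputable def zmulEquiv (T : ℝ) (hT : T ≠ 0) : ℤ ≃ AddSubgroup.zmultiples T :=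
  Equiv.ofBijective
    (fun k : ℤ => (⟨k • T, AddSubgroup.zsmul_mem_zmultiples T k⟩ : AddSubgroup.zmultiples T))
    (by
      constructor
      · intro a b hab
        have := congrArg Subtype.val hab
        exact smul_left_injective ℤ hT this
      · rintro ⟨x, hx⟩
        obtain ⟨k, hk⟩ := AddSubgroup.mem_zmultiples_iff.mp hx
        exact ⟨k, Subtype.ext hk⟩)

theorem bloch_direct_integral_isometry
    (n : ℕ) (U : ℝ → ℝ → EuclideanSpace ℂ (Fin n))
    (hcont : Continuous (Function.uncurry U))
    (hper : ∀ σ x : ℝ, U σ (x + 2 * π) = U σ x)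
    (hsupp : ∀ σ : ℝ, σ ∉ Set.Icc (-(1:ℝ)/2) (1/2) → U σ = 0) :
    MemLp (fun x : ℝ =>
        ∫ σ in (-(1:ℝ)/2)..(1/2), Complex.exp (Complex.I * σ * x) • U σ x) 2 volume ∧
    (∫ x : ℝ, ‖∫ σ in (-(1:ℝ)/2)..(1/2), Complex.exp (Complex.I * σ * x) • U σ x‖ ^ 2)
      = ∫ σ in (-(1:ℝ)/2)..(1/2), ∫ x in (-π)..π, ‖U σ x‖ ^ 2 := by
  set F : ℝ → EuclideanSpace ℂ (Fin n) := fun x : ℝ =>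
    ∫ σ in (-(1:ℝ)/2)..(1/2), Complex.exp (Complex.I * σ * x) • U σ x with hF
  have hFcont : Continuous F := by
    apply intervalIntegral.continuous_parametric_intervalIntegral_of_continuous'
    show Continuous (fun p : ℝ × ℝ => Complex.exp (Complex.I * p.2 * p.1) • U p.2 p.1)
    apply Continuous.fun_smul
    · exact Complex.continuous_exp.comp
        ((continuous_const.mul (Complex.continuous_ofReal.comp continuous_snd)).mul
          (Complex.continuous_ofReal.comp continuous_fst))
    · exact hcont.comp continuous_swap
  -- periodicity in ℤ multiples
  have hperZ : ∀ (σ y : ℝ) (k : ℤ), U σ (k • (2 * π) + y) = U σ y := by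
    intro σ y k
    have hp : Function.Periodic (U σ) (2 * π) := fun x => hper σ x
    have := (hp.zsmul k) y
    rwa [add_comm] at this
  -- F at translated points
  have hFtrans : ∀ (y : ℝ) (k : ℤ), F ((k • (2 * π) : ℝ) + y)
      = ∫ σ in (-(1:ℝ)/2)..(1/2),
          Complex.exp (Complex.I * σ * ((y + 2 * π * k : ℝ) : ℂ)) • U σ y := by
    intro y k
    rw [hF]
    simp only
    apply intervalIntegral.integral_congr
    intro σ _
    beta_reduce
    rw [hperZ σ y k]
    congr 2
    push_cast [zsmul_eq_mul]
    ring
  -- the W function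
  set W : ℝ → ℝ := fun y => ∫ σ in (-(1:ℝ)/2)..(1/2), ‖U σ y‖ ^ 2 with hW
  have hWcont : Continuous W := by
    apply intervalIntegral.continuous_parametric_intervalIntegral_of_continuous'
    exact ((hcont.comp continuous_swap).norm.pow 2)
  have hWnonneg : ∀ y, 0 ≤ W y := by
    intro y
    apply intervalIntegral.integral_nonneg (by norm_num)
    intro σ _
    positivity
  -- main lintegral computation
  set S : Set ℝ := Set.Ioc (-π) (-π + 2 * π) with hS
  have h2pi : (0:ℝ) < 2 * π := by positivity
  have hfund : IsAddFundamentalDomain (AddSubgroup.zmultiples (2 * π)) S volume :=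
    isAddFundamentalDomain_Ioc h2pi (-π)
  have hL : ∫⁻ x : ℝ, ENNReal.ofReal (‖F x‖ ^ 2)
      = ENNReal.ofReal (∫ y in S, W y) := by
    rw [hfund.lintegral_eq_tsum'' (fun x => ENNReal.ofReal (‖F x‖ ^ 2))]
    rw [← (zmulEquiv (2 * π) h2pi.ne').tsum_eq]
    have hterm : ∀ (k : ℤ), (∫⁻ y in S,
        ENNReal.ofReal (‖F ((zmulEquiv (2 * π) h2pi.ne' k) +ᵥ y)‖ ^ 2))
        = ∫⁻ y in S, ENNReal.ofReal (‖F ((k • (2 * π) : ℝ) + y)‖ ^ 2) := by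
      intro k
      rfl
    rw [tsum_congr hterm]
    rw [← lintegral_tsum (fun k => by
      apply Measurable.aemeasurable
      apply ENNReal.measurable_ofReal.comp
      exact ((hFcont.comp (continuous_const.add continuous_id)).norm.pow 2).measurable)]
    have hpoint : ∀ y : ℝ, (∑' k : ℤ, ENNReal.ofReal (‖F ((k • (2 * π) : ℝ) + y)‖ ^ 2))
        = ENNReal.ofReal (W y) := by
      intro y
      have hps := pointwise_parseval hcont hsupp y
      have h1 : ∀ k : ℤ, ‖F ((k • (2 * π) : ℝ) + y)‖ ^ 2
          = ‖∫ σ in (-(1:ℝ)/2)..(1/2),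
              Complex.exp (Complex.I * σ * ((y + 2 * π * k : ℝ) : ℂ)) • U σ y‖ ^ 2 := by
        intro k; rw [hFtrans y k]
      rw [tsum_congr (fun k => by rw [h1 k])]
      rw [← ENNReal.ofReal_tsum_of_nonneg (fun k => by positivity) hps.summable]
      rw [hps.tsum_eq]
    rw [lintegral_congr (fun y => hpoint y)]
    rw [← ofReal_integral_eq_lintegral_ofReal]
    · exact (hWcont.integrableOn_Ioc)
    · exact Filter.Eventually.of_forall hWnonneg
  have hsqint : Integrable (fun x => ‖F x‖ ^ 2) volume := by
    refine ⟨(hFcont.norm.pow 2).aestronglyMeasurable, ?_⟩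
    rw [hasFiniteIntegral_iff_ofReal (Filter.Eventually.of_forall fun x => by positivity)]
    rw [hL]
    exact ENNReal.ofReal_lt_top
  have hmem : MemLp F 2 volume :=
    (memLp_two_iff_integrable_sq_norm hFcont.aestronglyMeasurable).mpr hsqint
  refine ⟨hmem, ?_⟩
  have hWS : (0:ℝ) ≤ ∫ y in S, W y :=
    setIntegral_nonneg measurableSet_Ioc fun y _ => hWnonneg y
  have step1 : (∫ x : ℝ, ‖F x‖ ^ 2) = ∫ y in S, W y := by
    rw [integral_eq_lintegral_of_nonneg_ae (f := fun x => ‖F x‖ ^ 2) (Filter.Eventually.of_forall fun x => by positivity)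
      (hFcont.norm.pow 2).aestronglyMeasurable]
    rw [hL, ENNReal.toReal_ofReal hWS]
  rw [step1]
  -- Fubini
  have hpi : -π ≤ π := by linarith [pi_pos]
  have hhalf : (-(1:ℝ)/2) ≤ 1/2 := by norm_num
  have hS' : S = Set.Ioc (-π) π := by rw [hS, show -π + 2 * π = π by ring]
  have hWdef : ∀ y : ℝ, W y = ∫ σ in Set.Ioc (-(1:ℝ)/2) (1/2), ‖U σ y‖ ^ 2 := by
    intro y
    rw [hW]
    exact intervalIntegral.integral_of_le hhalf
  have hswap : (∫ y in Set.Ioc (-π) π, ∫ σ in Set.Ioc (-(1:ℝ)/2) (1/2), ‖U σ y‖ ^ 2)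
      = ∫ σ in Set.Ioc (-(1:ℝ)/2) (1/2), ∫ y in Set.Ioc (-π) π, ‖U σ y‖ ^ 2 := by
    apply integral_integral_swap
    rw [Measure.prod_restrict]
    have hcc : Continuous fun p : ℝ × ℝ => ‖U p.2 p.1‖ ^ 2 :=
      ((hcont.comp continuous_swap).norm.pow 2)
    have h1 : IntegrableOn (fun p : ℝ × ℝ => ‖U p.2 p.1‖ ^ 2)
        ((Set.Icc (-π) π) ×ˢ (Set.Icc (-(1:ℝ)/2) (1/2))) (volume.prod volume) := by
      rw [← Measure.volume_eq_prod]
      exact hcc.continuousOn.integrableOn_compact (isCompact_Icc.prod isCompact_Icc)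
    exact (h1.mono_set (Set.prod_mono Set.Ioc_subset_Icc_self Set.Ioc_subset_Icc_self))
  calc (∫ y in S, W y) = ∫ y in Set.Ioc (-π) π, ∫ σ in Set.Ioc (-(1:ℝ)/2) (1/2), ‖U σ y‖ ^ 2 := by
        rw [hS']
        exact setIntegral_congr_fun measurableSet_Ioc fun y _ => hWdef y
    _ = ∫ σ in Set.Ioc (-(1:ℝ)/2) (1/2), ∫ y in Set.Ioc (-π) π, ‖U σ y‖ ^ 2 := hswap
    _ = ∫ σ in (-(1:ℝ)/2)..(1/2), ∫ x in (-π)..π, ‖U σ x‖ ^ 2 := by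
        rw [intervalIntegral.integral_of_le hhalf]
        refine setIntegral_congr_fun measurableSet_Ioc fun σ _ => ?_
        rw [intervalIntegral.integral_of_le hpi]
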